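/- For a winning path of length k on an n×n Hex board with t wasted triangles, the identity 4(k−1) + t = 2(n+1)(n−1) holds; equivalently k = (n²+1)/2 − t/4. -/

import Mathlib

set_option maxHeartbeats 1000000


/-- Hex adjacency on integer coordinates. -/
def HexAdj (a b : ℤ × ℤ) : Prop :=
  (b.1 - a.1, b.2 - a.2) ∈
    ({(1,0), (-1,0), (0,1), (0,-1), (1,-1), (-1,1)} : Set (ℤ × ℤ))

/-- Cell of the n×n Hex board. -/
def OnBoard (n : ℕ) (a : ℤ × ℤ) : Prop :=
  1 ≤ a.1 ∧ a.1 ≤ (n : ℤ) ∧ 1 ≤ a.2 ∧ a.2 ≤ (n : ℤ)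

/-- A winning connection for Black: a set of board cells containing a chain of
pairwise-adjacent cells from a cell in the top row (y = 1) to a cell in the
bottom row (y = n). -/
def IsWinningConnection (n : ℕ) (S : Finset (ℤ × ℤ)) : Prop :=
  (∀ c ∈ S, OnBoard n c) ∧
  ∃ p : List (ℤ × ℤ), ∃ hp : p ≠ [],
    (∀ c ∈ p, c ∈ S) ∧ List.Chain' HexAdj p ∧
    (p.head hp).2 = 1 ∧ (p.getLast hp).2 = (n : ℤ)

/-- A winning path: a minimal winning connection. -/
def IsWinningPath (n : ℕ) (S : Finset (ℤ × ℤ)) : Prop :=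
  IsWinningConnection n S ∧ ∀ T ⊂ S, ¬ IsWinningConnection n T

/-- Cell of the board extended by the empty columns x = 0 and x = n+1. -/
def OnExtBoard (n : ℕ) (a : ℤ × ℤ) : Prop :=
  0 ≤ a.1 ∧ a.1 ≤ (n : ℤ) + 1 ∧ 1 ≤ a.2 ∧ a.2 ≤ (n : ℤ)

/-- A unit triangle of the extended grid: three mutually hex-adjacent positions. -/
def IsUnitTriangle (n : ℕ) (T : Finset (ℤ × ℤ)) : Prop :=
  T.card = 3 ∧ (∀ a ∈ T, OnExtBoard n a) ∧
    ∀ a ∈ T, ∀ b ∈ T, a ≠ b → HexAdj a b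

/-- Number of wasted triangles: unit triangles with no vertex in S. -/
noncomputable def wastedCount (n : ℕ) (S : Finset (ℤ × ℤ)) : ℕ :=
  Set.ncard {T : Finset (ℤ × ℤ) | IsUnitTriangle n T ∧ ∀ a ∈ T, a ∉ S}

def triUp (a b : ℤ) : Finset (ℤ × ℤ) := {(a,b),(a+1,b),(a,b+1)}
def triDn (a b : ℤ) : Finset (ℤ × ℤ) := {(a+1,b),(a,b+1),(a+1,b+1)}
def triAt (x : Bool × ℤ × ℤ) : Finset (ℤ × ℤ) :=
  if x.1 then triUp x.2.1 x.2.2 else triDn x.2.1 x.2.2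
noncomputable def Idx (n : ℕ) : Finset (Bool × ℤ × ℤ) :=
  Finset.univ ×ˢ (Finset.Icc 0 (n:ℤ) ×ˢ Finset.Icc 1 ((n:ℤ) - 1))
noncomputable def Tris (n : ℕ) : Finset (Finset (ℤ × ℤ)) := (Idx n).image triAt

lemma hexAdj_iff (a b : ℤ × ℤ) : HexAdj a b ↔
    (b.1 - a.1 = 1 ∧ b.2 - a.2 = 0) ∨ (b.1 - a.1 = -1 ∧ b.2 - a.2 = 0) ∨
    (b.1 - a.1 = 0 ∧ b.2 - a.2 = 1) ∨ (b.1 - a.1 = 0 ∧ b.2 - a.2 = -1) ∨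
    (b.1 - a.1 = 1 ∧ b.2 - a.2 = -1) ∨ (b.1 - a.1 = -1 ∧ b.2 - a.2 = 1) := by
  simp [HexAdj, Set.mem_insert_iff, Set.mem_singleton_iff, Prod.ext_iff]

lemma mem_triUp {a b : ℤ} {c : ℤ × ℤ} :
    c ∈ triUp a b ↔ c = (a,b) ∨ c = (a+1,b) ∨ c = (a,b+1) := by simp [triUp]

lemma mem_triDn {a b : ℤ} {c : ℤ × ℤ} :
    c ∈ triDn a b ↔ c = (a+1,b) ∨ c = (a,b+1) ∨ c = (a+1,b+1) := by simp [triDn]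

lemma mem_Idx {n : ℕ} {x : Bool × ℤ × ℤ} :
    x ∈ Idx n ↔ 0 ≤ x.2.1 ∧ x.2.1 ≤ (n:ℤ) ∧ 1 ≤ x.2.2 ∧ x.2.2 ≤ (n:ℤ) - 1 := by
  simp [Idx, and_assoc]

lemma idx_card (n : ℕ) : (Idx n).card = 2 * (n + 1) * (n - 1) := by
  rw [Idx, Finset.card_product, Finset.card_product, Int.card_Icc, Int.card_Icc]
  have h1 : ((n:ℤ) + 1 - 0).toNat = n + 1 := by omega
  have h2 : ((n:ℤ) - 1 + 1 - 1).toNat = n - 1 := by omega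
  rw [h1, h2]
  simp [Finset.card_univ]
  ring

lemma triAt_inj : Function.Injective triAt := by
  rintro ⟨s, a, b⟩ ⟨t, c, d⟩ h
  rw [Finset.ext_iff] at h
  have h1 := h (a, b); have h2 := h (a+1, b); have h3 := h (a, b+1)
  have h4 := h (c+1, d); have h5 := h (c, d+1)
  cases s <;> cases t <;>
    simp [triAt, triUp, triDn, Prod.ext_iff] at h1 h2 h3 h4 h5 ⊢ <;> omega

lemma tri_classify {a b c : ℤ × ℤ} (hab : HexAdj a b) (hac : HexAdj a c)
    (hbc : HexAdj b c) :
    ∃ x y : ℤ, ({a,b,c} : Finset (ℤ × ℤ)) = triUp x y ∨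
      ({a,b,c} : Finset (ℤ × ℤ)) = triDn x y := by
  rw [hexAdj_iff] at hab hac hbc
  rcases hab with ⟨h1,h2⟩|⟨h1,h2⟩|⟨h1,h2⟩|⟨h1,h2⟩|⟨h1,h2⟩|⟨h1,h2⟩ <;>
    rcases hbc with ⟨h3,h4⟩|⟨h3,h4⟩|⟨h3,h4⟩|⟨h3,h4⟩|⟨h3,h4⟩|⟨h3,h4⟩ <;>
    first
    | (exfalso; omega)
    | exact ⟨a.1, a.2, Or.inl (by ext z; simp [triUp, Prod.ext_iff]; omega)⟩
    | exact ⟨a.1-1, a.2, Or.inl (by ext z; simp [triUp, Prod.ext_iff]; omega)⟩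
    | exact ⟨a.1, a.2-1, Or.inl (by ext z; simp [triUp, Prod.ext_iff]; omega)⟩
    | exact ⟨a.1-1, a.2, Or.inr (by ext z; simp [triDn, Prod.ext_iff]; omega)⟩
    | exact ⟨a.1, a.2-1, Or.inr (by ext z; simp [triDn, Prod.ext_iff]; omega)⟩
    | exact ⟨a.1-1, a.2-1, Or.inr (by ext z; simp [triDn, Prod.ext_iff]; omega)⟩

lemma triAt_true (a b : ℤ) : triAt (true, a, b) = triUp a b := rfl
lemma triAt_false (a b : ℤ) : triAt (false, a, b) = triDn a b := rfl

lemma triUp_unit {n : ℕ} {a b : ℤ} (ha0 : 0 ≤ a) (han : a ≤ (n:ℤ))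
    (hb1 : 1 ≤ b) (hbn : b ≤ (n:ℤ) - 1) : IsUnitTriangle n (triUp a b) := by
  refine ⟨?_, ?_, ?_⟩
  · rw [triUp, Finset.card_insert_of_notMem (by simp [Prod.ext_iff]; try omega),
      Finset.card_insert_of_notMem (by simp [Prod.ext_iff]; try omega),
      Finset.card_singleton]
  · intro c hc
    rcases mem_triUp.mp hc with rfl|rfl|rfl <;>
      exact ⟨by simp; omega, by simp; omega, by simp; omega, by simp; omega⟩
  · intro c hc d hd hcd
    rw [hexAdj_iff]
    rcases mem_triUp.mp hc with rfl|rfl|rfl <;> rcases mem_triUp.mp hd with rfl|rfl|rfl <;>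
      simp [Prod.ext_iff] at hcd ⊢ <;> try omega

lemma triDn_unit {n : ℕ} {a b : ℤ} (ha0 : 0 ≤ a) (han : a ≤ (n:ℤ))
    (hb1 : 1 ≤ b) (hbn : b ≤ (n:ℤ) - 1) : IsUnitTriangle n (triDn a b) := by
  refine ⟨?_, ?_, ?_⟩
  · rw [triDn, Finset.card_insert_of_notMem (by simp [Prod.ext_iff]; try omega),
      Finset.card_insert_of_notMem (by simp [Prod.ext_iff]; try omega),
      Finset.card_singleton]
  · intro c hc
    rcases mem_triDn.mp hc with rfl|rfl|rfl <;>
      exact ⟨by simp; omega, by simp; omega, by simp; omega, by simp; omega⟩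
  · intro c hc d hd hcd
    rw [hexAdj_iff]
    rcases mem_triDn.mp hc with rfl|rfl|rfl <;> rcases mem_triDn.mp hd with rfl|rfl|rfl <;>
      simp [Prod.ext_iff] at hcd ⊢ <;> try omega

lemma unit_of_mem {n : ℕ} {x : Bool × ℤ × ℤ} (hx : x ∈ Idx n) :
    IsUnitTriangle n (triAt x) := by
  obtain ⟨s, a, b⟩ := x
  rw [mem_Idx] at hx
  simp only at hx
  obtain ⟨ha0, han, hb1, hbn⟩ := hx
  cases s
  · rw [triAt_false]; exact triDn_unit ha0 han hb1 hbn
  · rw [triAt_true]; exact triUp_unit ha0 han hb1 hbn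
lemma unit_iff_mem {n : ℕ} {T : Finset (ℤ × ℤ)} :
    IsUnitTriangle n T ↔ T ∈ Tris n := by
  constructor
  · rintro ⟨hcard, hext, hadj⟩
    obtain ⟨a, b, c, hab, hac, hbc, rfl⟩ := Finset.card_eq_three.mp hcard
    have h1 : HexAdj a b := hadj a (by simp) b (by simp) hab
    have h2 : HexAdj a c := hadj a (by simp) c (by simp) hac
    have h3 : HexAdj b c := hadj b (by simp) c (by simp) hbc
    obtain ⟨x, y, h | h⟩ := tri_classify h1 h2 h3
    · have e1 : OnExtBoard n (x, y) := hext _ (by rw [h, mem_triUp]; tauto)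
      have e2 : OnExtBoard n (x+1, y) := hext _ (by rw [h, mem_triUp]; tauto)
      have e3 : OnExtBoard n (x, y+1) := hext _ (by rw [h, mem_triUp]; tauto)
      refine Finset.mem_image.mpr ⟨(true, x, y), mem_Idx.mpr ?_, ?_⟩
      · obtain ⟨q1,q2,q3,q4⟩ := e1; obtain ⟨r1,r2,r3,r4⟩ := e2; obtain ⟨s1,s2,s3,s4⟩ := e3
        simp only at *; omega
      · rw [h]; rfl
    · have e1 : OnExtBoard n (x+1, y) := hext _ (by rw [h, mem_triDn]; tauto)
      have e2 : OnExtBoard n (x, y+1) := hext _ (by rw [h, mem_triDn]; tauto)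
      have e3 : OnExtBoard n (x+1, y+1) := hext _ (by rw [h, mem_triDn]; tauto)
      refine Finset.mem_image.mpr ⟨(false, x, y), mem_Idx.mpr ?_, ?_⟩
      · obtain ⟨q1,q2,q3,q4⟩ := e1; obtain ⟨r1,r2,r3,r4⟩ := e2; obtain ⟨s1,s2,s3,s4⟩ := e3
        simp only at *; omega
      · rw [h]; rfl
  · intro hT
    obtain ⟨x, hx, rfl⟩ := Finset.mem_image.mp hT
    exact unit_of_mem hx

lemma filter_Tris_card (n : ℕ) (P : Finset (ℤ × ℤ) → Prop) [DecidablePred P] :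
    ((Tris n).filter P).card = ((Idx n).filter (fun x => P (triAt x))).card := by
  rw [Tris, Finset.filter_image]
  exact Finset.card_image_of_injOn (triAt_inj.injOn)

lemma deg_count (n : ℕ) (c : ℤ × ℤ) (hc : OnBoard n c) :
    ((Idx n).filter (fun x => c ∈ triAt x)).card =
      (if c.2 = 1 then 0 else 3) + (if c.2 = (n:ℤ) then 0 else 3) := by
  obtain ⟨c1, c2⟩ := c
  obtain ⟨h1, h2, h3, h4⟩ := hc
  simp only at h1 h2 h3 h4 ⊢
  by_cases e1 : c2 = 1 <;> by_cases e2 : c2 = (n:ℤ)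
  · rw [if_pos e1, if_pos e2]
    rw [Finset.card_eq_zero, Finset.filter_eq_empty_iff]
    intro x hx
    rw [mem_Idx] at hx
    omega
  · rw [if_pos e1, if_neg e2]
    have : (Idx n).filter (fun x => (c1,c2) ∈ triAt x) =
        {(true,c1,c2),(true,c1-1,c2),(false,c1-1,c2)} := by
      ext ⟨s,a,b⟩
      rw [Finset.mem_filter, mem_Idx]
      cases s <;>
        simp [triAt_true, triAt_false, mem_triUp, mem_triDn, Prod.ext_iff] <;> omega
    rw [this]
    rw [Finset.card_insert_of_notMem (by simp [Prod.ext_iff]; try omega),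
      Finset.card_insert_of_notMem (by simp [Prod.ext_iff]; try omega),
      Finset.card_singleton]
  · rw [if_neg e1, if_pos e2]
    have : (Idx n).filter (fun x => (c1,c2) ∈ triAt x) =
        {(true,c1,c2-1),(false,c1,c2-1),(false,c1-1,c2-1)} := by
      ext ⟨s,a,b⟩
      rw [Finset.mem_filter, mem_Idx]
      cases s <;>
        simp [triAt_true, triAt_false, mem_triUp, mem_triDn, Prod.ext_iff] <;> omega
    rw [this]
    rw [Finset.card_insert_of_notMem (by simp [Prod.ext_iff]; try omega),
      Finset.card_insert_of_notMem (by simp [Prod.ext_iff]; try omega),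
      Finset.card_singleton]
  · rw [if_neg e1, if_neg e2]
    have : (Idx n).filter (fun x => (c1,c2) ∈ triAt x) =
        {(true,c1,c2),(true,c1-1,c2),(true,c1,c2-1),
         (false,c1-1,c2),(false,c1,c2-1),(false,c1-1,c2-1)} := by
      ext ⟨s,a,b⟩
      rw [Finset.mem_filter, mem_Idx]
      cases s <;>
        simp [triAt_true, triAt_false, mem_triUp, mem_triDn, Prod.ext_iff] <;> omega
    rw [this]
    rw [Finset.card_insert_of_notMem (by simp [Prod.ext_iff]; try omega),
      Finset.card_insert_of_notMem (by simp [Prod.ext_iff]; try omega),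
      Finset.card_insert_of_notMem (by simp [Prod.ext_iff]; try omega),
      Finset.card_insert_of_notMem (by simp [Prod.ext_iff]; try omega),
      Finset.card_insert_of_notMem (by simp [Prod.ext_iff]; try omega),
      Finset.card_singleton]

lemma edge_count (n : ℕ) (a b : ℤ × ℤ) (ha : OnBoard n a) (hb : OnBoard n b)
    (hadj : HexAdj a b) (hrow : a.2 = b.2 → 2 ≤ a.2 ∧ a.2 ≤ (n:ℤ) - 1) :
    ((Idx n).filter (fun x => a ∈ triAt x ∧ b ∈ triAt x)).card = 2 := by
  obtain ⟨a1, a2⟩ := a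
  obtain ⟨b1, b2⟩ := b
  obtain ⟨h1, h2, h3, h4⟩ := ha
  obtain ⟨h5, h6, h7, h8⟩ := hb
  simp only at h1 h2 h3 h4 h5 h6 h7 h8 hrow ⊢
  rcases (hexAdj_iff _ _).mp hadj with ⟨d1,d2⟩|⟨d1,d2⟩|⟨d1,d2⟩|⟨d1,d2⟩|⟨d1,d2⟩|⟨d1,d2⟩ <;>
    simp only at d1 d2
  · try have h9 := hrow (by omega)
    have hE : (Idx n).filter (fun x => ((a1,a2):ℤ×ℤ) ∈ triAt x ∧ ((b1,b2):ℤ×ℤ) ∈ triAt x) =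
        {(true,a1,a2),(false,a1,a2-1)} := by
      ext ⟨s,c,d⟩
      rw [Finset.mem_filter, mem_Idx]
      cases s <;>
        simp [triAt_true, triAt_false, mem_triUp, mem_triDn, Prod.ext_iff] <;> omega
    rw [hE, Finset.card_insert_of_notMem (by simp [Prod.ext_iff]; try omega),
      Finset.card_singleton]
  · try have h9 := hrow (by omega)
    have hE : (Idx n).filter (fun x => ((a1,a2):ℤ×ℤ) ∈ triAt x ∧ ((b1,b2):ℤ×ℤ) ∈ triAt x) =
        {(true,a1-1,a2),(false,a1-1,a2-1)} := by
      ext ⟨s,c,d⟩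
      rw [Finset.mem_filter, mem_Idx]
      cases s <;>
        simp [triAt_true, triAt_false, mem_triUp, mem_triDn, Prod.ext_iff] <;> omega
    rw [hE, Finset.card_insert_of_notMem (by simp [Prod.ext_iff]; try omega),
      Finset.card_singleton]
  · try have h9 := hrow (by omega)
    have hE : (Idx n).filter (fun x => ((a1,a2):ℤ×ℤ) ∈ triAt x ∧ ((b1,b2):ℤ×ℤ) ∈ triAt x) =
        {(true,a1,a2),(false,a1-1,a2)} := by
      ext ⟨s,c,d⟩
      rw [Finset.mem_filter, mem_Idx]
      cases s <;>
        simp [triAt_true, triAt_false, mem_triUp, mem_triDn, Prod.ext_iff] <;> omega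
    rw [hE, Finset.card_insert_of_notMem (by simp [Prod.ext_iff]; try omega),
      Finset.card_singleton]
  · try have h9 := hrow (by omega)
    have hE : (Idx n).filter (fun x => ((a1,a2):ℤ×ℤ) ∈ triAt x ∧ ((b1,b2):ℤ×ℤ) ∈ triAt x) =
        {(true,a1,a2-1),(false,a1-1,a2-1)} := by
      ext ⟨s,c,d⟩
      rw [Finset.mem_filter, mem_Idx]
      cases s <;>
        simp [triAt_true, triAt_false, mem_triUp, mem_triDn, Prod.ext_iff] <;> omega
    rw [hE, Finset.card_insert_of_notMem (by simp [Prod.ext_iff]; try omega),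
      Finset.card_singleton]
  · try have h9 := hrow (by omega)
    have hE : (Idx n).filter (fun x => ((a1,a2):ℤ×ℤ) ∈ triAt x ∧ ((b1,b2):ℤ×ℤ) ∈ triAt x) =
        {(true,a1,a2-1),(false,a1,a2-1)} := by
      ext ⟨s,c,d⟩
      rw [Finset.mem_filter, mem_Idx]
      cases s <;>
        simp [triAt_true, triAt_false, mem_triUp, mem_triDn, Prod.ext_iff] <;> omega
    rw [hE, Finset.card_insert_of_notMem (by simp [Prod.ext_iff]; try omega),
      Finset.card_singleton]
  · try have h9 := hrow (by omega)
    have hE : (Idx n).filter (fun x => ((a1,a2):ℤ×ℤ) ∈ triAt x ∧ ((b1,b2):ℤ×ℤ) ∈ triAt x) =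
        {(true,a1-1,a2),(false,a1-1,a2)} := by
      ext ⟨s,c,d⟩
      rw [Finset.mem_filter, mem_Idx]
      cases s <;>
        simp [triAt_true, triAt_false, mem_triUp, mem_triDn, Prod.ext_iff] <;> omega
    rw [hE, Finset.card_insert_of_notMem (by simp [Prod.ext_iff]; try omega),
      Finset.card_singleton]

lemma conn_of_fn (n : ℕ) (T : Finset (ℤ × ℤ)) (hb : ∀ c ∈ T, OnBoard n c)
    (k : ℕ) (f : ℕ → ℤ × ℤ) (hk : 0 < k) (hmem : ∀ i < k, f i ∈ T)
    (hch : ∀ i, i + 1 < k → HexAdj (f i) (f (i+1)))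
    (h0 : (f 0).2 = 1) (hl : (f (k-1)).2 = (n:ℤ)) : IsWinningConnection n T := by
  have hlen : ((List.range k).map f).length = k := by simp
  have hne : (List.range k).map f ≠ [] := by
    apply List.ne_nil_of_length_pos; rw [hlen]; exact hk
  refine ⟨hb, (List.range k).map f, hne, ?_, ?_, ?_, ?_⟩
  · intro c hc
    obtain ⟨i, hi, rfl⟩ := List.mem_map.mp hc
    exact hmem i (List.mem_range.mp hi)
  · refine List.isChain_iff_getElem.mpr ?_
    intro i hi
    rw [hlen] at hi
    simp only [List.get_eq_getElem, List.getElem_map, List.getElem_range]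
    exact hch i (by omega)
  · rw [List.head_eq_getElem_zero hne]
    simp only [List.getElem_map, List.getElem_range]
    exact h0
  · rw [List.getLast_eq_getElem]
    simp only [hlen, List.getElem_map, List.getElem_range]
    exact hl


lemma fn_of_conn {n : ℕ} {S : Finset (ℤ × ℤ)} (h : IsWinningConnection n S) :
    ∃ m, 0 < m ∧ ∃ f : ℕ → ℤ × ℤ, (∀ i < m, f i ∈ S) ∧
      (∀ i, i + 1 < m → HexAdj (f i) (f (i+1))) ∧ (f 0).2 = 1 ∧
      (f (m-1)).2 = (n:ℤ) := by
  obtain ⟨hb, p, hp, hc, hch, hh, hl⟩ := h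
  refine ⟨p.length, List.length_pos_iff.mpr hp, fun i => p.getD i (0,0), ?_, ?_, ?_, ?_⟩
  · intro i hi
    simp only []
    rw [List.getD_eq_getElem p (0,0) hi]
    exact hc _ (List.getElem_mem hi)
  · intro i hi
    simp only []
    rw [List.getD_eq_getElem p (0,0) (by omega), List.getD_eq_getElem p (0,0) hi]
    have := List.isChain_iff_getElem.mp hch i (by omega)
    simpa [List.get_eq_getElem] using this
  · simp only []
    rw [List.getD_eq_getElem p (0,0) (List.length_pos_iff.mpr hp),
      ← List.head_eq_getElem_zero hp]
    exact hh
  · simp only []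
    rw [List.getD_eq_getElem p (0,0) (by have := List.length_pos_iff.mpr hp; omega),
      ← List.getLast_eq_getElem hp]
    exact hl

theorem area_identity (n : ℕ) (S : Finset (ℤ × ℤ)) (h : IsWinningPath n S) :
    4 * S.card + wastedCount n S = 2 * (n + 1) * (n - 1) + 4 := by
  classical
  obtain ⟨hconn, hmin⟩ := h
  have hSb : ∀ c ∈ S, OnBoard n c := hconn.1
  have hex : ∃ m, 0 < m ∧ ∃ f : ℕ → ℤ × ℤ, (∀ i < m, f i ∈ S) ∧
      (∀ i, i + 1 < m → HexAdj (f i) (f (i+1))) ∧ (f 0).2 = 1 ∧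
      (f (m-1)).2 = (n:ℤ) := fn_of_conn hconn
  obtain ⟨k, ⟨hk, f, hfS, hch, h0, hl⟩, hkmin⟩ :
      ∃ k, (0 < k ∧ ∃ f : ℕ → ℤ × ℤ, (∀ i < k, f i ∈ S) ∧
        (∀ i, i + 1 < k → HexAdj (f i) (f (i+1))) ∧ (f 0).2 = 1 ∧
        (f (k-1)).2 = (n:ℤ)) ∧
        ∀ m, m < k → ¬(0 < m ∧ ∃ f : ℕ → ℤ × ℤ, (∀ i < m, f i ∈ S) ∧
        (∀ i, i + 1 < m → HexAdj (f i) (f (i+1))) ∧ (f 0).2 = 1 ∧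
        (f (m-1)).2 = (n:ℤ)) :=
    ⟨Nat.find hex, Nat.find_spec hex, fun m hm => Nat.find_min hex hm⟩
  have hb : ∀ i < k, OnBoard n (f i) := fun i hi => hSb _ (hfS i hi)
  -- glue: shortcut from index s to index t
  have glue : ∀ s t, s < t → t ≤ k → (t = k → (f s).2 = (n:ℤ)) →
      (t < k → HexAdj (f s) (f t)) → t ≤ s + 1 := by
    intro s t hst htk hseam1 hseam2
    by_contra hcon
    push_neg at hcon
    have hlt : s + 1 + (k - t) < k := by omega
    refine hkmin _ hlt ⟨by omega, fun l => if l ≤ s then f l else f (l + (t - s - 1)),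
      ?_, ?_, ?_, ?_⟩
    · intro i hi
      by_cases his : i ≤ s
      · simp only [if_pos his]; exact hfS i (by omega)
      · simp only [if_neg his]; exact hfS _ (by omega)
    · intro i hi
      by_cases h1 : i + 1 ≤ s
      · simp only [if_pos h1, if_pos (show i ≤ s by omega)]
        exact hch i (by omega)
      · by_cases h2 : i ≤ s
        · have his : i = s := by omega
          subst his
          simp only [if_pos h2, if_neg h1]
          have e : i + 1 + (t - i - 1) = t := by omega
          rw [e]
          exact hseam2 (by omega)
        · simp only [if_neg h2, if_neg (show ¬ i + 1 ≤ s by omega)]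
          have e : i + 1 + (t - s - 1) = (i + (t - s - 1)) + 1 := by omega
          rw [e]
          exact hch _ (by omega)
    · simp only [if_pos (Nat.zero_le s)]
      exact h0
    · by_cases ht : t = k
      · have e : s + 1 + (k - t) - 1 = s := by omega
        rw [e]
        simp only [if_pos (le_refl s)]
        exact hseam1 ht
      · have h2 : ¬ (s + 1 + (k - t) - 1 ≤ s) := by omega
        simp only [if_neg h2]
        have e : s + 1 + (k - t) - 1 + (t - s - 1) = k - 1 := by omega
        rw [e]
        exact hl
  have glue2 : ∀ j, j < k → (f j).2 = 1 → j = 0 := by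
    intro j hj h1j
    by_contra h0j
    have hlt : k - j < k := by omega
    refine hkmin _ hlt ⟨by omega, fun l => f (l + j), ?_, ?_, ?_, ?_⟩
    · intro i hi; exact hfS _ (by omega)
    · intro i hi
      have e : i + 1 + j = (i + j) + 1 := by omega
      simp only []
      rw [e]
      exact hch _ (by omega)
    · simpa using h1j
    · simp only []
      have e : k - j - 1 + j = k - 1 := by omega
      rw [e]
      exact hl
  have hrow1 : ∀ i, i < k → 0 < i → (f i).2 ≠ 1 := by
    intro i hik h0i hcon
    have := glue2 i hik hcon
    omega
  have hrown : ∀ i, i < k - 1 → (f i).2 ≠ (n:ℤ) := by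
    intro i hik hcon
    have := glue i k (by omega) le_rfl (fun _ => hcon) (fun hlt => absurd hlt (lt_irrefl k))
    omega
  have hinj : ∀ i j, i < j → j < k → f i ≠ f j := by
    intro i j hij hjk heq
    have hs1 : j + 1 = k → (f i).2 = (n:ℤ) := by
      intro ht
      rw [heq]
      have e : j = k - 1 := by omega
      rw [e]
      exact hl
    have hs2 : j + 1 < k → HexAdj (f i) (f (j+1)) := by
      intro ht
      rw [heq]
      exact hch j (by omega)
    have := glue i (j+1) (by omega) (by omega) hs1 hs2
    omega
  have hnadj : ∀ i j, i + 1 < j → j < k → ¬ HexAdj (f i) (f j) := by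
    intro i j hij hjk hadj
    have := glue i j (by omega) (by omega) (fun ht => absurd ht (by omega)) (fun _ => hadj)
    omega
  have hSimg : S = (Finset.range k).image f := by
    have hsub : (Finset.range k).image f ⊆ S := by
      intro c hc
      obtain ⟨i, hi, rfl⟩ := Finset.mem_image.mp hc
      exact hfS i (Finset.mem_range.mp hi)
    by_contra hne
    have hss : (Finset.range k).image f ⊂ S :=
      Finset.ssubset_iff_subset_ne.mpr ⟨hsub, fun hcon => hne hcon.symm⟩
    exact hmin _ hss (conn_of_fn n _ (fun c hc => hSb c (hsub hc)) k f hk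
      (fun i hi => Finset.mem_image.mpr ⟨i, Finset.mem_range.mpr hi, rfl⟩) hch h0 hl)
  have hSmem : ∀ c ∈ S, ∃ i, i < k ∧ f i = c := by
    intro c hc
    rw [hSimg] at hc
    obtain ⟨i, hi, rfl⟩ := Finset.mem_image.mp hc
    exact ⟨i, Finset.mem_range.mp hi, rfl⟩
  have hinjOn : Set.InjOn f (Finset.range k) := by
    intro i hi j hj heq
    simp only [Finset.coe_range, Set.mem_Iio] at hi hj
    rcases lt_trichotomy i j with hlt | heqq | hgt
    · exact absurd heq (hinj i j hlt hj)
    · exact heqq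
    · exact absurd heq.symm (hinj j i hgt hi)
  have hcard : S.card = k := by
    rw [hSimg, Finset.card_image_of_injOn hinjOn, Finset.card_range]
  -- small board cases
  rcases Nat.lt_or_ge n 2 with hn | hn
  · -- n = 0 or n = 1
    interval_cases n
    · -- n = 0 : impossible
      exfalso
      obtain ⟨q1, q2, q3, q4⟩ := hb 0 hk
      omega
    · -- n = 1
      have hk1 : k = 1 := by
        by_contra hk1
        have h2k : 2 ≤ k := by omega
        have := hrow1 1 (by omega) (by omega)
        obtain ⟨q1, q2, q3, q4⟩ := hb 1 (by omega)
        omega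
      have hwc : wastedCount 1 S = 0 := by
        have he : {T : Finset (ℤ × ℤ) | IsUnitTriangle 1 T ∧ ∀ a ∈ T, a ∉ S} = ∅ := by
          rw [Set.eq_empty_iff_forall_notMem]
          rintro T ⟨hT, -⟩
          obtain ⟨x, hx, rfl⟩ := Finset.mem_image.mp (unit_iff_mem.mp hT)
          rw [mem_Idx] at hx
          omega
        rw [wastedCount, he, Set.ncard_empty]
      rw [hwc, hcard, hk1]
    -- main case n ≥ 2
  · have hn' : 2 ≤ (n:ℤ) := by exact_mod_cast hn
    have hk2 : 2 ≤ k := by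
      by_contra hk2
      have : k = 1 := by omega
      rw [this] at hl
      simp at hl
      rw [hl] at h0
      omega
    set Touch := (Tris n).filter (fun T => ∃ a ∈ T, a ∈ S) with hTouchDef
    set W := (Tris n).filter (fun T => ∀ a ∈ T, a ∉ S) with hWDef
    have hwc : wastedCount n S = W.card := by
      rw [wastedCount]
      have e : {T : Finset (ℤ × ℤ) | IsUnitTriangle n T ∧ ∀ a ∈ T, a ∉ S} = ↑W := by
        ext T
        simp only [Set.mem_setOf_eq, hWDef, Finset.coe_filter, unit_iff_mem]
      rw [e, Set.ncard_coe_finset]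
    have hsplit : Touch.card + W.card = (Tris n).card := by
      have e : W = (Tris n).filter (fun T => ¬ ∃ a ∈ T, a ∈ S) := by
        apply Finset.filter_congr
        intro T _
        push_neg
        rfl
      rw [hTouchDef, e]
      exact Finset.card_filter_add_card_filter_not _
    have hTrisCard : (Tris n).card = 2 * (n + 1) * (n - 1) := by
      rw [Tris, Finset.card_image_of_injOn triAt_inj.injOn, idx_card]
    have hadjT : ∀ T ∈ Tris n, ∀ a ∈ T, ∀ b ∈ T, a ≠ b → HexAdj a b :=
      fun T hT => (unit_iff_mem.mpr hT).2.2
    set G : ℕ → Finset (Finset (ℤ × ℤ)) :=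
      fun i => (Tris n).filter (fun T => f i ∈ T ∧ ∀ j < i, f j ∉ T) with hGdef
    have hTouch : Touch = (Finset.range k).biUnion G := by
      ext T
      simp only [hTouchDef, hGdef, Finset.mem_biUnion, Finset.mem_filter, Finset.mem_range]
      constructor
      · rintro ⟨hT, a, haT, haS⟩
        obtain ⟨i0, hi0, hfi0⟩ := hSmem a haS
        have hexi : ∃ i, i < k ∧ f i ∈ T := ⟨i0, hi0, by rw [hfi0]; exact haT⟩
        obtain ⟨hik, hiT⟩ := Nat.find_spec hexi
        exact ⟨Nat.find hexi, hik, hT, hiT,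
          fun j hj hjT => Nat.find_min hexi hj ⟨by omega, hjT⟩⟩
      · rintro ⟨i, hik, hT, hiT, -⟩
        exact ⟨hT, f i, hiT, hfS i hik⟩
    have hdisj : ∀ i ∈ Finset.range k, ∀ j ∈ Finset.range k, i ≠ j →
        Disjoint (G i) (G j) := by
      have key : ∀ i j, i < j → Disjoint (G i) (G j) := by
        intro i j hij
        rw [Finset.disjoint_left]
        rintro T hTi hTj
        simp only [hGdef, Finset.mem_filter] at hTi hTj
        exact hTj.2.2 i hij hTi.2.1
      intro i _ j _ hne
      rcases lt_or_gt_of_ne hne with hlt | hgt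
      · exact key i j hlt
      · exact (key j i hgt).symm
    have hcount : Touch.card = ∑ i ∈ Finset.range k, (G i).card := by
      rw [hTouch, Finset.card_biUnion hdisj]
    have hG0 : (G 0).card = 3 := by
      have e : G 0 = (Tris n).filter (fun T => f 0 ∈ T) := by
        apply Finset.filter_congr
        intro T _
        simp
      rw [e, filter_Tris_card, deg_count n (f 0) (hb 0 hk), h0]
      rw [if_pos rfl, if_neg (by omega)]
    have hGsucc : ∀ i, 0 < i → i < k →
        (G i).card = ((Idx n).filter (fun x => f i ∈ triAt x)).card - 2 := by
      intro i h0i hik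
      have e : G i = (Tris n).filter (fun T => f i ∈ T ∧ f (i-1) ∉ T) := by
        apply Finset.filter_congr
        intro T hT
        constructor
        · rintro ⟨h1, h2⟩
          exact ⟨h1, h2 _ (by omega)⟩
        · rintro ⟨h1, h2⟩
          refine ⟨h1, fun j hj hjT => ?_⟩
          have hne : f j ≠ f i := hinj j i hj hik
          have hadj : HexAdj (f j) (f i) := hadjT T hT _ hjT _ h1 hne
          have hji : j = i - 1 := by
            by_contra hji
            exact hnadj j i (by omega) hik hadj
          exact h2 (hji ▸ hjT)
      have e2 : (Tris n).filter (fun T => f i ∈ T ∧ f (i-1) ∉ T) =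
          ((Tris n).filter (fun T => f i ∈ T)).filter (fun T => ¬ f (i-1) ∈ T) := by
        rw [Finset.filter_filter]
      have e3 : ((Tris n).filter (fun T => f i ∈ T)).filter (fun T => f (i-1) ∈ T) =
          (Tris n).filter (fun T => f (i-1) ∈ T ∧ f i ∈ T) := by
        rw [Finset.filter_filter]
        apply Finset.filter_congr
        intro T _
        exact and_comm
      have e4 := Finset.card_filter_add_card_filter_not
        (s := (Tris n).filter (fun T => f i ∈ T)) (p := fun T => f (i-1) ∈ T)
      have hedge : ((Tris n).filter (fun T => f (i-1) ∈ T ∧ f i ∈ T)).card = 2 := by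
        rw [filter_Tris_card]
        apply edge_count n (f (i-1)) (f i) (hb _ (by omega)) (hb _ hik)
        · have e5 : i - 1 + 1 = i := by omega
          have := hch (i-1) (by omega)
          rw [e5] at this
          exact this
        · intro hye
          have q1 := hrown (i-1) (by omega)
          have q2 := hrow1 i hik h0i
          obtain ⟨-, -, q3, q4⟩ := hb (i-1) (by omega)
          omega
      have hdeg : ((Tris n).filter (fun T => f i ∈ T)).card =
          ((Idx n).filter (fun x => f i ∈ triAt x)).card := filter_Tris_card n _
      rw [e, e2]
      rw [e3, hedge, hdeg] at e4
      omega
    have hGmid : ∀ i, 0 < i → i < k - 1 → (G i).card = 4 := by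
      intro i h0i hik
      rw [hGsucc i h0i (by omega), deg_count n (f i) (hb i (by omega)),
        if_neg (hrow1 i (by omega) h0i), if_neg (hrown i hik)]
    have hGlast : (G (k-1)).card = 1 := by
      rw [hGsucc (k-1) (by omega) (by omega), deg_count n (f (k-1)) (hb _ (by omega)),
        hl, if_neg (by omega), if_pos rfl]
    have hsum : Touch.card = 4 * k - 4 := by
      rw [hcount]
      obtain ⟨m, rfl⟩ : ∃ m, k = m + 2 := ⟨k - 2, by omega⟩
      rw [Finset.sum_range_succ', Finset.sum_range_succ]
      have hmid : ∀ i ∈ Finset.range m, (G (i+1)).card = 4 :=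
        fun i hi => hGmid (i+1) (by omega) (by simp at hi; omega)
      rw [Finset.sum_congr rfl hmid, Finset.sum_const, smul_eq_mul, Finset.card_range]
      have e1 : (G (m + 1)).card = 1 := by
        have : m + 1 = (m + 2) - 1 := by omega
        rw [this]
        exact hGlast
      rw [e1, hG0]
      omega
    rw [hwc, hcard, ← hTrisCard, ← hsplit, hsum]
    omega
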